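/- Boundedness of the total bacterial concentration: Let n ≥ 1 and let S, I, R, W : [0,∞) → ℝ^n be differentiable functions solving the cholera metapopulation system for all t ≥ 0, with W_i(t) ≥ 0 and I_i(t) ≥ 0 for all t ≥ 0 and all i. Suppose there is a constant K ≥ 0 such that Σ_{i=1}^n ζ_i I_i(t) ≤ K for all t ≥ 0. Let d_min^C = min_{i=1,…,n} d_i^C (which is positive) and let T_B(t) = Σ_{i=1}^n W_i(t). Then for all t ≥ 0, T_B(t) ≤ max( T_B(0), K / d_min^C ). -/

import Mathlib

/-- Boundedness of the total bacterial concentration in the cholera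
metapopulation model. -/
theorem cholera_total_bacterial_concentration_bounded
    (n : ℕ) (hn : 1 ≤ n)
    (b dH v ε γ δ ζ dC βI βW : Fin n → ℝ)
    (hb : ∀ i, 0 ≤ b i) (hdH : ∀ i, 0 < dH i) (hv : ∀ i, 0 ≤ v i)
    (hε : ∀ i, 0 ≤ ε i) (hγ : ∀ i, 0 ≤ γ i) (hδ : ∀ i, 0 ≤ δ i)
    (hζ : ∀ i, 0 ≤ ζ i) (hdC : ∀ i, 0 < dC i)
    (hβI : ∀ i, 0 ≤ βI i) (hβW : ∀ i, 0 ≤ βW i)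
    (MS MI MR MW : Matrix (Fin n) (Fin n) ℝ)
    (hMSoff : ∀ i j, i ≠ j → 0 ≤ MS i j) (hMScol : ∀ j, ∑ i, MS i j = 0)
    (hMIoff : ∀ i j, i ≠ j → 0 ≤ MI i j) (hMIcol : ∀ j, ∑ i, MI i j = 0)
    (hMRoff : ∀ i j, i ≠ j → 0 ≤ MR i j) (hMRcol : ∀ j, ∑ i, MR i j = 0)
    (hMWoff : ∀ i j, i ≠ j → 0 ≤ MW i j) (hMWcol : ∀ j, ∑ i, MW i j = 0)
    (S I R W : ℝ → Fin n → ℝ)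
    (hS : ∀ t, 0 ≤ t → ∀ i, HasDerivWithinAt (fun τ => S τ i)
      (b i + ε i * R t i - (βI i * I t i + βW i * W t i) * S t i
        - (v i + dH i) * S t i + ∑ j, MS i j * S t j) (Set.Ici (0:ℝ)) t)
    (hI : ∀ t, 0 ≤ t → ∀ i, HasDerivWithinAt (fun τ => I τ i)
      ((βI i * I t i + βW i * W t i) * S t i - (γ i + δ i + dH i) * I t i
        + ∑ j, MI i j * I t j) (Set.Ici (0:ℝ)) t)
    (hR : ∀ t, 0 ≤ t → ∀ i, HasDerivWithinAt (fun τ => R τ i)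
      (γ i * I t i + v i * S t i - (ε i + dH i) * R t i
        + ∑ j, MR i j * R t j) (Set.Ici (0:ℝ)) t)
    (hW : ∀ t, 0 ≤ t → ∀ i, HasDerivWithinAt (fun τ => W τ i)
      (ζ i * I t i - dC i * W t i + ∑ j, MW i j * W t j) (Set.Ici (0:ℝ)) t)
    (hWnn : ∀ t, 0 ≤ t → ∀ i, 0 ≤ W t i)
    (hInn : ∀ t, 0 ≤ t → ∀ i, 0 ≤ I t i)
    (K : ℝ) (hK : 0 ≤ K) (hKbound : ∀ t, 0 ≤ t → ∑ i, ζ i * I t i ≤ K)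
    (dCmin : ℝ) (hdCmin_le : ∀ i, dCmin ≤ dC i) (hdCmin_mem : ∃ i, dC i = dCmin) :
    ∀ t, 0 ≤ t → ∑ i, W t i ≤ max (∑ i, W 0 i) (K / dCmin) := by
  -- setup
  obtain ⟨i0, hi0⟩ := hdCmin_mem
  have hdCmin_pos : 0 < dCmin := hi0 ▸ hdC i0
  set M : ℝ := max (∑ i, W 0 i) (K / dCmin) with hM
  have hKM : K ≤ dCmin * M := by
    have : K / dCmin ≤ M := le_max_right _ _
    calc K = dCmin * (K / dCmin) := by field_simp
    _ ≤ dCmin * M := by nlinarith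
  set T : ℝ → ℝ := fun t => ∑ i, W t i with hT
  set D : ℝ → ℝ := fun t => ∑ i, (ζ i * I t i - dC i * W t i + ∑ j, MW i j * W t j)
    with hD
  have hTderiv : ∀ t, 0 ≤ t → HasDerivWithinAt T (D t) (Set.Ici (0:ℝ)) t := by
    intro t ht
    exact HasDerivWithinAt.fun_sum fun i _ => hW t ht i
  have hDbound : ∀ t, 0 ≤ t → D t ≤ K - dCmin * T t := by
    intro t ht
    have h1 : ∑ i, ∑ j, MW i j * W t j = 0 := by
      rw [Finset.sum_comm]
      simp only [← Finset.sum_mul, hMWcol, zero_mul, Finset.sum_const_zero]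
    have h2 : dCmin * T t ≤ ∑ i, dC i * W t i := by
      rw [hT, Finset.mul_sum]
      exact Finset.sum_le_sum fun i _ =>
        mul_le_mul_of_nonneg_right (hdCmin_le i) (hWnn t ht i)
    have h3 : ∑ i, ζ i * I t i ≤ K := hKbound t ht
    have : D t = (∑ i, ζ i * I t i) - (∑ i, dC i * W t i)
        + ∑ i, ∑ j, MW i j * W t j := by
      rw [hD]; rw [← Finset.sum_sub_distrib, ← Finset.sum_add_distrib]
    rw [this, h1, add_zero]
    linarith
  -- Gronwall on [0, t]
  intro t ht
  have key : ∀ x ∈ Set.Icc (0:ℝ) t, (fun s => T s - M) x ≤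
      gronwallBound 0 (-dCmin) 0 (x - 0) := by
    apply le_gronwallBound_of_liminf_deriv_right_le (f' := D)
    · intro s hs
      exact ((hTderiv s hs.1).continuousWithinAt.mono
        (Set.Icc_subset_Ici_self)).sub continuousWithinAt_const
    · intro x hx r hr
      have hderiv : HasDerivWithinAt (fun s => T s - M) (D x) (Set.Ici x) x :=
        (((hTderiv x hx.1).mono (Set.Ici_subset_Ici.2 hx.1)).sub_const M)
      have hslope := hasDerivWithinAt_iff_tendsto_slope.1 hderiv
      have hIoi : Set.Ici x \ {x} = Set.Ioi x := Set.Ici_sdiff_left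
      rw [hIoi] at hslope
      have hev : ∀ᶠ z in nhdsWithin x (Set.Ioi x),
          (z - x)⁻¹ * ((fun s => T s - M) z - (fun s => T s - M) x) < r := by
        filter_upwards [hslope.eventually_lt_const hr] with z hz
        simpa [slope_def_field, div_eq_inv_mul] using hz
      exact hev.frequently
    · show T 0 - M ≤ 0
      simp only [sub_nonpos]
      exact le_max_left _ _
    · intro x hx
      have := hDbound x hx.1
      show D x ≤ -dCmin * (T x - M) + 0
      nlinarith [hKM]
  have := key t ⟨ht, le_refl t⟩
  rw [sub_zero, gronwallBound_ε0_δ0] at this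
  simpa using this
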